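/- Let H be an n×n Hermitian matrix with an eigenvalue λ of multiplicity m. Then there exists a subset X of the index set with |X| = m such that λ is not an eigenvalue of the principal submatrix of H obtained by deleting the rows and columns indexed by X (i.e., a star set for λ exists). -/

import Mathlib

open Matrix

open ComplexOrder in
private lemma star_dot_self_eq_zero_aux {N : Type*} [Fintype N] {v : N → ℂ}
    (h : star v ⬝ᵥ v = 0) : v = 0 :=
  dotProduct_star_self_eq_zero.mp h

/-- For an `n × n` Hermitian matrix `H` with eigenvalue `λ` of multiplicity `m`,
there is a star set: a set `X` of `m` indices such that `λ` is not an eigenvalue of the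
principal submatrix of `H` obtained by deleting the rows and columns indexed by `X`. -/
theorem stmt_0 (n m : ℕ) (H : Matrix (Fin n) (Fin n) ℂ) (hH : H.IsHermitian) (lam : ℂ)
    (hmult : Module.finrank ℂ (Module.End.eigenspace (Matrix.toLin' H) lam) = m) :
    ∃ X : Finset (Fin n), X.card = m ∧
      ¬ Module.End.HasEigenvalue
        (Matrix.toLin' (H.submatrix (fun i : {i : Fin n // i ∉ X} => (i : Fin n))
          (fun i : {i : Fin n // i ∉ X} => (i : Fin n)))) lam := by
  classical
  set M : Matrix (Fin n) (Fin n) ℂ := H - lam • 1 with hMdef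
  set K : Submodule ℂ (Fin n → ℂ) := Module.End.eigenspace (Matrix.toLin' H) lam with hKdef
  have hMu : ∀ u : Fin n → ℂ, M *ᵥ u = H *ᵥ u - lam • u := by
    intro u
    rw [hMdef, Matrix.sub_mulVec, Matrix.smul_mulVec, Matrix.one_mulVec]
  have hmemK : ∀ u : Fin n → ℂ, u ∈ K ↔ M *ᵥ u = 0 := by
    intro u
    rw [hKdef, Module.End.mem_eigenspace_iff, Matrix.toLin'_apply, hMu, sub_eq_zero]
  -- the coordinate functionals restricted to `K`
  set f : Fin n → Module.Dual ℂ K := fun i => (LinearMap.proj i).comp K.subtype with hfdef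
  have hspan : Submodule.span ℂ (Set.range f) = ⊤ := by
    have hsurj : Function.Surjective K.subtype.dualMap :=
      LinearMap.dualMap_surjective_of_injective (Submodule.injective_subtype K)
    have hcoord : ∀ i, (Pi.basisFun ℂ (Fin n)).coord i = LinearMap.proj i := by
      intro i
      ext x
      simp [Module.Basis.coord_apply, Pi.basisFun_repr]
    have hb : Submodule.span ℂ (Set.range ((Pi.basisFun ℂ (Fin n)).dualBasis)) = ⊤ :=
      Module.Basis.span_eq _
    have himg : Set.range f =
        K.subtype.dualMap '' (Set.range ((Pi.basisFun ℂ (Fin n)).dualBasis)) := by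
      ext φ
      constructor
      · rintro ⟨i, rfl⟩
        exact ⟨(Pi.basisFun ℂ (Fin n)).dualBasis i, ⟨i, rfl⟩, by
          simp [Module.Basis.coe_dualBasis, hcoord i, hfdef]; rfl⟩
      · rintro ⟨ψ, ⟨i, rfl⟩, rfl⟩
        exact ⟨i, by simp [Module.Basis.coe_dualBasis, hcoord i, hfdef]; rfl⟩
    rw [himg, ← Submodule.map_span, hb, Submodule.map_top, LinearMap.range_eq_top.mpr hsurj]
  -- pick a basis of the dual of `K` among the `f i`
  obtain ⟨b, hb_sub, hb_span, hb_indep⟩ := exists_linearIndependent ℂ (Set.range f)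
  rw [hspan] at hb_span
  have hDbasis : Module.Basis b ℂ (Module.Dual ℂ K) :=
    Module.Basis.mk hb_indep (by rw [Subtype.range_coe, hb_span])
  haveI : Fintype b := FiniteDimensional.fintypeBasisIndex hDbasis
  have hcardb : Fintype.card b = m := by
    have := Module.finrank_eq_card_basis hDbasis
    rw [Subspace.dual_finrank_eq] at this
    omega
  -- choose an index for each basis functional
  have hchoice : ∀ x : b, ∃ i : Fin n, f i = (x : Module.Dual ℂ K) := fun x => hb_sub x.2
  choose g hg using hchoice
  have hginj : Function.Injective g := by
    intro x y hxy
    apply Subtype.ext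
    rw [← hg x, ← hg y, hxy]
  set X : Finset (Fin n) := Finset.image g Finset.univ with hXdef
  have hcardX : X.card = m := by
    rw [hXdef, Finset.card_image_of_injective _ hginj, Finset.card_univ, hcardb]
  -- injectivity of coordinate restriction on K
  have hinj : ∀ u : K, (∀ i ∈ X, (u : Fin n → ℂ) i = 0) → u = 0 := by
    intro u hu
    have hall : ∀ φ : Module.Dual ℂ K, φ u = 0 := by
      intro φ
      have hφ : φ ∈ Submodule.span ℂ b := by rw [hb_span]; trivial
      induction hφ using Submodule.span_induction with
      | mem ψ hψ =>
        have : f (g ⟨ψ, hψ⟩) = ψ := hg ⟨ψ, hψ⟩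
        rw [← this]
        exact hu (g ⟨ψ, hψ⟩) (by rw [hXdef]; exact Finset.mem_image_of_mem g (Finset.mem_univ _))
      | zero => simp
      | add ψ χ _ _ h1 h2 => simp [h1, h2]
      | smul c ψ _ h1 => simp [h1]
    exact (Module.forall_dual_apply_eq_zero_iff ℂ u).mp hall
  -- surjectivity of coordinate restriction on K onto coordinates in X
  have hsurjX : ∀ c : Fin n → ℂ, ∃ u : K, ∀ i ∈ X, (u : Fin n → ℂ) i = c i := by
    intro c
    set ψ : K →ₗ[ℂ] ({ i // i ∈ X } → ℂ) := LinearMap.pi (fun i => f (i : Fin n)) with hψdef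
    have hψinj : Function.Injective ψ := by
      rw [← LinearMap.ker_eq_bot]
      apply (Submodule.eq_bot_iff _).mpr
      intro u hu
      refine hinj u fun i hi => ?_
      have := congrFun (LinearMap.mem_ker.mp hu) ⟨i, hi⟩
      simpa [hψdef, hfdef] using this
    have hrange : LinearMap.range ψ = ⊤ := by
      apply Submodule.eq_top_of_finrank_eq
      rw [LinearMap.finrank_range_of_inj hψinj, hmult,
        Module.finrank_pi ℂ, Fintype.card_coe, hcardX]
    obtain ⟨u, hu⟩ := LinearMap.range_eq_top.mp hrange (fun i => c (i : Fin n))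
    refine ⟨u, fun i hi => ?_⟩
    have := congrFun hu ⟨i, hi⟩
    simpa [hψdef, hfdef] using this
  -- λ is real (conj lam = lam), unless X is empty
  have hstar : Mᴴ = M ∨ X = ∅ := by
    by_cases hKbot : K = ⊥
    · right
      rw [← Finset.card_eq_zero, hcardX, ← hmult, hKbot]
      simp
    · left
      obtain ⟨u, huK, hu0⟩ := Submodule.exists_mem_ne_zero_of_ne_bot hKbot
      have hHu : H *ᵥ u = lam • u := by
        have h1 := (hmemK u).mp huK
        rw [hMu, sub_eq_zero] at h1
        exact h1
      have h2 : star u ⬝ᵥ (H *ᵥ u) = lam * (star u ⬝ᵥ u) := by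
        rw [hHu, dotProduct_smul, smul_eq_mul]
      have h3 : star u ⬝ᵥ (H *ᵥ u) = star lam * (star u ⬝ᵥ u) := by
        rw [Matrix.dotProduct_mulVec]
        have : star u ᵥ* H = star (H *ᵥ u) := by
          rw [Matrix.star_mulVec, hH.eq]
        rw [this, hHu, star_smul, smul_dotProduct, smul_eq_mul]
      have hne : star u ⬝ᵥ u ≠ 0 := fun h => hu0 (star_dot_self_eq_zero_aux h)
      have hlam : star lam = lam := by
        have := h3.symm.trans h2
        exact mul_right_cancel₀ hne this
      rw [hMdef, conjTranspose_sub, hH.eq, conjTranspose_smul, conjTranspose_one, hlam]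
  -- main argument
  refine ⟨X, hcardX, fun heig => ?_⟩
  obtain ⟨v, hv⟩ := heig.exists_hasEigenvector
  set ι : {i : Fin n // i ∉ X} → Fin n := fun i => (i : Fin n) with hιdef
  have hιinj : Function.Injective ι := Subtype.coe_injective
  have hviEq : (H.submatrix ι ι) *ᵥ v = lam • v := by
    have := Module.End.mem_eigenspace_iff.mp hv.1
    rwa [Matrix.toLin'_apply] at this
  have hMAv : (M.submatrix ι ι) *ᵥ v = 0 := by
    have hsub : M.submatrix ι ι = H.submatrix ι ι - lam • (1 : Matrix _ _ ℂ) := by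
      ext s t
      simp [hMdef, Matrix.submatrix_apply, Matrix.one_apply, hιinj.eq_iff]
    rw [hsub,
      Matrix.sub_mulVec, Matrix.smul_mulVec, Matrix.one_mulVec, hviEq, sub_self]
  set w : Fin n → ℂ := fun i => if h : i ∈ X then 0 else v ⟨i, h⟩ with hwdef
  set z : Fin n → ℂ := M *ᵥ w with hzdef
  have hz0 : ∀ i, i ∉ X → z i = 0 := by
    intro i hi
    have hsum : z i = ∑ t : {j : Fin n // j ∉ X}, M i (t : Fin n) * v t := by
      rw [hzdef]
      show (fun j => M i j) ⬝ᵥ w = _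
      rw [dotProduct]
      rw [show (∑ j, M i j * w j) = ∑ j ∈ Xᶜ, M i j * w j by
        refine (Finset.sum_subset (Finset.subset_univ _) ?_).symm
        intro j _ hj
        rw [Finset.mem_compl, not_not] at hj
        simp [hwdef, hj]]
      rw [Finset.sum_subtype Xᶜ (fun j => Finset.mem_compl) (fun j => M i j * w j)]
      refine Finset.sum_congr rfl fun t _ => ?_
      simp [hwdef, t.2]
    have : z i = ((M.submatrix ι ι) *ᵥ v) ⟨i, hi⟩ := by
      rw [hsum]
      show _ = (fun t => (M.submatrix ι ι) ⟨i, hi⟩ t) ⬝ᵥ v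
      rw [dotProduct]
      rfl
    rw [this, hMAv]
    rfl
  have hz : z = 0 := by
    rcases hstar with hMH | hXemp
    · obtain ⟨u, hu⟩ := hsurjX z
      have horth : star (u : Fin n → ℂ) ⬝ᵥ z = 0 := by
        rw [hzdef, Matrix.dotProduct_mulVec]
        have : star (u : Fin n → ℂ) ᵥ* M = star (M *ᵥ (u : Fin n → ℂ)) := by
          rw [Matrix.star_mulVec, hMH]
        rw [this, (hmemK _).mp u.2]
        simp
      have hzz : star z ⬝ᵥ z = 0 := by
        rw [← horth]
        rw [dotProduct, dotProduct]
        refine Finset.sum_congr rfl fun i _ => ?_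
        by_cases hi : i ∈ X
        · rw [Pi.star_apply, Pi.star_apply, hu i hi]
        · rw [hz0 i hi, mul_zero, mul_zero]
      exact star_dot_self_eq_zero_aux hzz
    · funext i
      exact hz0 i (by rw [hXemp]; exact Finset.notMem_empty i)
  have hwK : w ∈ K := (hmemK w).mpr (by rw [← hzdef, hz])
  have hw0 : (⟨w, hwK⟩ : K) = 0 := by
    refine hinj _ fun i hi => ?_
    simp [hwdef, hi]
  have hwzero : w = 0 := by
    simpa using congrArg (Subtype.val) hw0
  apply hv.2
  funext t
  have : w (t : Fin n) = v t := by simp [hwdef, t.2]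
  rw [← this, hwzero]
  rfl
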